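/- arXiv:2007.14747 — 2 statements merged into one kernel-verified Lean document; each statement's English description precedes it below -/
import Mathlib

section
/- Let m ∈ ℕ and let v : (0,∞) → ℝ be continuous with sufficient decay at infinity (say, decaying faster than any polynomial). Then for every r > 0: D_r^m ∫_r^∞ (t² − r²)^m v(t) t dt = (−1)^m m! ∫_r^∞ v(t) t dt, and applying D_r once more, D_r^(m+1) ∫_r^∞ (t² − r²)^m v(t) t dt = (−1)^(m+1) (m!/2) v(r), where D_r denotes the operator g ↦ (1/(2r)) dg/dr and D_r^k its k-fold iterate. -/
open MeasureTheory Filter Topology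

noncomputable section

/-- Spatial convolution on `ℝ^d`: `(g ⊛ h)(x) = ∫ g(y) h(x-y) dy`. -/
def sconv {d : ℕ} (g h : EuclideanSpace ℝ (Fin d) → ℝ) :
    EuclideanSpace ℝ (Fin d) → ℝ :=
  fun x => ∫ y, g y * h (x - y)

/-- Convolution on `ℝ`. -/
def conv1 (g h : ℝ → ℝ) : ℝ → ℝ := fun t => ∫ s, g s * h (t - s)

/-- `d`-dimensional Fourier transform with the convention `F f(ξ) = ∫ f(x) e^{-i x·ξ} dx`. -/
def Fd {d : ℕ} (f : EuclideanSpace ℝ (Fin d) → ℝ) (ξ : EuclideanSpace ℝ (Fin d)) : ℂ :=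
  ∫ x, Complex.exp (-Complex.I * ((inner ℝ x ξ : ℝ) : ℂ)) * (f x : ℂ)

/-- one-dimensional Fourier transform `F v(ω) = ∫ v(t) e^{-i t ω} dt`. -/
def F1 (v : ℝ → ℝ) (ω : ℝ) : ℂ :=
  ∫ t : ℝ, Complex.exp (-Complex.I * ((t * ω : ℝ) : ℂ)) * (v t : ℂ)

/-- inverse `d`-dimensional Fourier transform `F⁻¹ g(x) = (2π)^{-d} ∫ g(ξ) e^{i x·ξ} dξ`. -/
def Fdinv {d : ℕ} (g : EuclideanSpace ℝ (Fin d) → ℂ) (x : EuclideanSpace ℝ (Fin d)) : ℂ :=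
  (((2 * Real.pi) ^ d : ℝ) : ℂ)⁻¹ * ∫ ξ, Complex.exp (Complex.I * ((inner ℝ x ξ : ℝ) : ℂ)) * g ξ

/-- Laplacian in the spatial variables. -/
def lap {d : ℕ} (f : EuclideanSpace ℝ (Fin d) → ℝ) (x : EuclideanSpace ℝ (Fin d)) : ℝ :=
  ∑ i : Fin d, iteratedDeriv 2 (fun r : ℝ => f (x + r • EuclideanSpace.single i (1 : ℝ))) 0

/-- `p` is a smooth solution of the wave equation `∂ₜ²p - Δp = 0` with initial data `(f, 0)`. -/
def IsWaveSol {d : ℕ} (p : EuclideanSpace ℝ (Fin d) → ℝ → ℝ)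
    (f : EuclideanSpace ℝ (Fin d) → ℝ) : Prop :=
  ContDiff ℝ (⊤ : ℕ∞) (fun q : EuclideanSpace ℝ (Fin d) × ℝ => p q.1 q.2) ∧
  (∀ x t, iteratedDeriv 2 (p x) t = lap (fun y => p y t) x) ∧
  (∀ x, p x 0 = f x) ∧
  (∀ x, deriv (p x) 0 = 0)

/-- `k`-fold iterate of the operator `(1/(2t)) d/dt`. -/
def Dop : ℕ → (ℝ → ℝ) → (ℝ → ℝ)
  | 0, v => v
  | k + 1, v => fun t => deriv (Dop k v) t / (2 * t)

/-- The radial profile of `R♯v` (formula (9) of the paper, evaluated at `r = ‖x‖`). -/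
def RsharpProfile (d : ℕ) (v : ℝ → ℝ) (r : ℝ) : ℝ :=
  if Odd d then
    ((-1 : ℝ) ^ ((d - 1) / 2) / Real.sqrt (Real.pi ^ (d - 1))) * Dop ((d - 1) / 2) v r
  else
    (2 * (-1 : ℝ) ^ ((d - 2) / 2) / Real.sqrt (Real.pi ^ d)) *
      ∫ t in Set.Ioi r, Dop (d / 2) v t / Real.sqrt (t ^ 2 - r ^ 2) * t

/-- The radial function `R♯v` on `ℝ^d`. -/
def Rsharp (d : ℕ) (v : ℝ → ℝ) (x : EuclideanSpace ℝ (Fin d)) : ℝ :=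
  RsharpProfile d v ‖x‖

/-- total measure `ω_{d-2} = 2 π^((d-1)/2) / Γ((d-1)/2)` of the unit sphere `S^{d-2}`. -/
def sphereVol (d : ℕ) : ℝ :=
  2 * Real.pi ^ (((d : ℝ) - 1) / 2) / Real.Gamma (((d : ℝ) - 1) / 2)

/-- radial Radon profile `Ru` of a radial function with profile `ub`. -/
def radonProfile (d : ℕ) (ub : ℝ → ℝ) (t : ℝ) : ℝ :=
  if d = 1 then ub t
  else sphereVol d * ∫ s in Set.Ioi |t|, ub s * (s ^ 2 - t ^ 2) ^ (((d : ℝ) - 3) / 2) * s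

/-- Convolutional frame on `ℝ^d` with frame bounds `A`, `B`. -/
def ConvFrame {d : ℕ} {Λ : Type*} (u : Λ → EuclideanSpace ℝ (Fin d) → ℝ) (A B : ℝ) : Prop :=
  ∀ f : EuclideanSpace ℝ (Fin d) → ℝ, MemLp f 2 volume →
    (A * ∫ x, f x ^ 2) ≤ (∑' l, ∫ x, sconv f (u l) x ^ 2) ∧
    (∑' l, ∫ x, sconv f (u l) x ^ 2) ≤ B * ∫ x, f x ^ 2

/-- Convolutional frame on `ℝ` with frame bounds `A`, `B`. -/
def ConvFrame1 {Λ : Type*} (v : Λ → ℝ → ℝ) (A B : ℝ) : Prop :=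
  ∀ g : ℝ → ℝ, MemLp g 2 volume →
    (A * ∫ t : ℝ, g t ^ 2) ≤ (∑' l, ∫ t : ℝ, conv1 g (v l) t ^ 2) ∧
    (∑' l, ∫ t : ℝ, conv1 g (v l) t ^ 2) ≤ B * ∫ t : ℝ, g t ^ 2

/-- The series `Σ_λ g_λ` converges unconditionally in `L²(ℝ^d)` to `f`. -/
def L2SumTo {d : ℕ} {Λ : Type*} (g : Λ → EuclideanSpace ℝ (Fin d) → ℝ)
    (f : EuclideanSpace ℝ (Fin d) → ℝ) : Prop :=
  Tendsto (fun F : Finset Λ => ∫ x, (∑ l ∈ F, g l x - f x) ^ 2) atTop (nhds 0)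

/-- `v` is (the restriction of) a Schwartz function. -/
def IsSchwartz1 (v : ℝ → ℝ) : Prop := ∃ V : SchwartzMap ℝ ℝ, ∀ t, V t = v t

/-- The map `s ↦ v(√|s|)` is of class `C^⌈(d-1)/2⌉`. -/
def SmoothRootClass (d : ℕ) (v : ℝ → ℝ) : Prop :=
  ContDiff ℝ ((⌈((d : ℝ) - 1) / 2⌉₊ : ℕ) : ℕ∞) fun s : ℝ => v (Real.sqrt |s|)

/-- decay faster than any polynomial at infinity. -/
def RapidDecay (φ : ℝ → ℝ) : Prop := ∀ n : ℕ, ∃ C : ℝ, ∀ t : ℝ, 1 ≤ t → |φ t| * t ^ n ≤ C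

end

noncomputable section StmtTen
open Set Filter Topology MeasureTheory


variable (v : ℝ → ℝ)

def Gfun (m : ℕ) (s : ℝ) : ℝ := ∫ t in Set.Ioi s, (t ^ 2 - s ^ 2) ^ m * v t * t

def Afun (n : ℕ) (s : ℝ) : ℝ := ∫ t in Set.Ioi s, v t * t ^ n

variable {v}

lemma contOn_A (hv : ContinuousOn v (Set.Ioi 0)) (n : ℕ) :
    ContinuousOn (fun t => v t * t ^ n) (Set.Ioi 0) :=
  hv.mul (continuous_pow n).continuousOn

lemma integrableOn_A (hv : ContinuousOn v (Set.Ioi 0)) (hdec : RapidDecay v) (n : ℕ)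
    {s : ℝ} (hs : 0 < s) : IntegrableOn (fun t => v t * t ^ n) (Set.Ioi s) := by
  set M : ℝ := max s 1 with hM
  have hsM : s ≤ M := le_max_left _ _
  have h1M : (1 : ℝ) ≤ M := le_max_right _ _
  have h0M : (0 : ℝ) < M := lt_of_lt_of_le one_pos h1M
  have hsplit : Set.Ioc s M ∪ Set.Ioi M = Set.Ioi s := Set.Ioc_union_Ioi_eq_Ioi hsM
  rw [← hsplit]
  apply MeasureTheory.IntegrableOn.union
  · have : ContinuousOn (fun t => v t * t ^ n) (Set.Icc s M) :=
      (contOn_A hv n).mono (fun x hx => lt_of_lt_of_le hs hx.1)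
    exact (this.integrableOn_Icc).mono_set Set.Ioc_subset_Icc_self
  · obtain ⟨C, hC⟩ := hdec (n + 2)
    have hmeas : AEStronglyMeasurable (fun t => v t * t ^ n) (volume.restrict (Set.Ioi M)) :=
      ((contOn_A hv n).mono (fun x hx => lt_of_lt_of_le h0M (le_of_lt hx))).aestronglyMeasurable
        measurableSet_Ioi
    have hg : IntegrableOn (fun t : ℝ => C * t ^ (-2 : ℝ)) (Set.Ioi M) :=
      (integrableOn_Ioi_rpow_of_lt (by norm_num) h0M).const_mul C
    refine hg.mono' hmeas ?_
    filter_upwards [ae_restrict_mem measurableSet_Ioi] with t ht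
    have ht1 : (1 : ℝ) ≤ t := le_trans h1M (le_of_lt ht)
    have ht0 : (0 : ℝ) < t := lt_of_lt_of_le one_pos ht1
    have hb := hC t ht1
    have hrw : t ^ (-2 : ℝ) = (t ^ 2)⁻¹ := by
      rw [Real.rpow_neg (le_of_lt ht0)]
      norm_num
    rw [hrw, Real.norm_eq_abs, abs_mul, abs_pow, abs_of_pos ht0]
    have ht2 : (0:ℝ) < t ^ 2 := by positivity
    have heq : C * (t ^ 2)⁻¹ = C / t ^ 2 := (div_eq_mul_inv C _).symm
    rw [heq, le_div_iff₀ ht2]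
    calc |v t| * t ^ n * t ^ 2 = |v t| * t ^ (n + 2) := by ring
      _ ≤ C := hb


lemma hasDerivAt_A (hv : ContinuousOn v (Set.Ioi 0)) (hdec : RapidDecay v) (n : ℕ)
    {s : ℝ} (hs : 0 < s) : HasDerivAt (Afun v n) (-(v s * s ^ n)) s := by
  set f : ℝ → ℝ := fun t => v t * t ^ n with hf
  set a : ℝ := s / 2 with ha
  have ha0 : 0 < a := by positivity
  have has : a < s := by rw [ha]; linarith
  have hIa : IntegrableOn f (Set.Ioi a) := integrableOn_A hv hdec n ha0
  have hkey : ∀ x ∈ Set.Ioi a, Afun v n x = Afun v n a - ∫ t in a..x, f t := by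
    intro x hx
    have hax : a ≤ x := le_of_lt hx
    have hsplit : Set.Ioc a x ∪ Set.Ioi x = Set.Ioi a := Set.Ioc_union_Ioi_eq_Ioi hax
    have h1 : IntegrableOn f (Set.Ioc a x) :=
      hIa.mono_set (by rw [← hsplit]; exact Set.subset_union_left)
    have h2 : IntegrableOn f (Set.Ioi x) :=
      hIa.mono_set (by rw [← hsplit]; exact Set.subset_union_right)
    have hsum := MeasureTheory.setIntegral_union (Set.Ioc_disjoint_Ioi le_rfl)
      measurableSet_Ioi h1 h2 (μ := volume)
    rw [hsplit] at hsum
    rw [intervalIntegral.integral_of_le hax]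
    simp only [Afun]
    simp only [hf] at hsum ⊢
    linarith
  have hint : IntervalIntegrable f volume a s := by
    rw [intervalIntegrable_iff_integrableOn_Ioc_of_le (le_of_lt has)]
    exact hIa.mono_set Set.Ioc_subset_Ioi_self
  have hmeas : StronglyMeasurableAtFilter f (𝓝 s) volume :=
    ContinuousOn.stronglyMeasurableAtFilter isOpen_Ioi (contOn_A hv n) s hs
  have hcont : ContinuousAt f s := (contOn_A hv n).continuousAt (Ioi_mem_nhds hs)
  have hd : HasDerivAt (fun x => Afun v n a - ∫ t in a..x, f t) (-(f s)) s :=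
    (intervalIntegral.integral_hasDerivAt_right hint hmeas hcont).const_sub _
  exact hd.congr_of_eventuallyEq (Filter.eventuallyEq_of_mem (Ioi_mem_nhds has) hkey)


lemma G_eq_sum (hv : ContinuousOn v (Set.Ioi 0)) (hdec : RapidDecay v) (m : ℕ)
    {x : ℝ} (hx : 0 < x) :
    Gfun v m x = ∑ k ∈ Finset.range (m + 1),
      (m.choose k : ℝ) * (-x ^ 2) ^ (m - k) * Afun v (2 * k + 1) x := by
  have hpt : ∀ t ∈ Set.Ioi x,
      (t ^ 2 - x ^ 2) ^ m * v t * t =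
      ∑ k ∈ Finset.range (m + 1),
        ((m.choose k : ℝ) * (-x ^ 2) ^ (m - k)) * (v t * t ^ (2 * k + 1)) := by
    intro t _
    have : (t ^ 2 - x ^ 2) ^ m = (t ^ 2 + (-x ^ 2)) ^ m := by ring_nf
    rw [this, add_pow, Finset.sum_mul, Finset.sum_mul]
    refine Finset.sum_congr rfl fun k _ => ?_
    ring
  rw [show Gfun v m x = ∫ t in Set.Ioi x,
      ∑ k ∈ Finset.range (m + 1),
        ((m.choose k : ℝ) * (-x ^ 2) ^ (m - k)) * (v t * t ^ (2 * k + 1)) from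
    MeasureTheory.setIntegral_congr_fun measurableSet_Ioi hpt]
  rw [MeasureTheory.integral_finset_sum _ (fun k _ =>
    ((integrableOn_A hv hdec (2 * k + 1) hx).const_mul _))]
  refine Finset.sum_congr rfl fun k _ => ?_
  rw [MeasureTheory.integral_const_mul]
  rfl

lemma hasDerivAt_G0 (hv : ContinuousOn v (Set.Ioi 0)) (hdec : RapidDecay v)
    {s : ℝ} (hs : 0 < s) : HasDerivAt (Gfun v 0) (-(v s * s)) s := by
  have h : Gfun v 0 = Afun v 1 := by
    funext x
    simp only [Gfun, Afun, pow_zero, one_mul, pow_one]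
  rw [h]
  simpa using hasDerivAt_A hv hdec 1 hs


lemma nat_key (m k : ℕ) :
    (m + 1 - k) * (m + 1).choose k = (m + 1) * m.choose k := by
  have h1 := Nat.choose_succ_right_eq (m + 1) k
  have h2 := Nat.add_one_mul_choose_eq m k
  rw [mul_comm]
  rw [← h1]
  exact h2.symm

lemma hasDerivAt_G_succ (hv : ContinuousOn v (Set.Ioi 0)) (hdec : RapidDecay v) (m : ℕ)
    {s : ℝ} (hs : 0 < s) :
    HasDerivAt (Gfun v (m + 1)) (-(2 * (m + 1) * s) * Gfun v m s) s := by
  have hterm : ∀ k ∈ Finset.range (m + 2),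
      HasDerivAt (fun x : ℝ =>
          (((m + 1).choose k : ℝ) * (-x ^ 2) ^ (m + 1 - k)) * Afun v (2 * k + 1) x)
        ( (((m + 1).choose k : ℝ) * (((m + 1 - k : ℕ) : ℝ) * (-s ^ 2) ^ (m + 1 - k - 1)
              * (-(2 * s)))) * Afun v (2 * k + 1) s
          + (((m + 1).choose k : ℝ) * (-s ^ 2) ^ (m + 1 - k))
              * (-(v s * s ^ (2 * k + 1))) ) s := by
    intro k _
    have hA := hasDerivAt_A hv hdec (2 * k + 1) hs
    have h2 : HasDerivAt (fun x : ℝ => -x ^ 2) (-(2 * s)) s := by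
      exact (hasDerivAt_pow 2 s).neg.congr_deriv (by norm_num)
    have hp : HasDerivAt (fun x : ℝ => (-x ^ 2) ^ (m + 1 - k))
        (((m + 1 - k : ℕ) : ℝ) * (-s ^ 2) ^ (m + 1 - k - 1) * (-(2 * s))) s :=
      h2.pow _
    exact (hp.const_mul (((m + 1).choose k : ℝ))).mul hA
  have hsum := HasDerivAt.fun_sum hterm
  have hev : Gfun v (m + 1) =ᶠ[𝓝 s] fun x => ∑ k ∈ Finset.range (m + 2),
      (((m + 1).choose k : ℝ) * (-x ^ 2) ^ (m + 1 - k)) * Afun v (2 * k + 1) x := by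
    refine Filter.eventuallyEq_of_mem (Ioi_mem_nhds hs) fun x hx => ?_
    rw [G_eq_sum hv hdec (m + 1) hx]
  have hG := hsum.congr_of_eventuallyEq hev
  -- identify the derivative value
  have hval : (∑ k ∈ Finset.range (m + 2),
      ( (((m + 1).choose k : ℝ) * (((m + 1 - k : ℕ) : ℝ) * (-s ^ 2) ^ (m + 1 - k - 1)
            * (-(2 * s)))) * Afun v (2 * k + 1) s
        + (((m + 1).choose k : ℝ) * (-s ^ 2) ^ (m + 1 - k))
            * (-(v s * s ^ (2 * k + 1))) ))
      = -(2 * (m + 1) * s) * Gfun v m s := by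
    rw [Finset.sum_add_distrib]
    have hS2 : (∑ k ∈ Finset.range (m + 2),
        (((m + 1).choose k : ℝ) * (-s ^ 2) ^ (m + 1 - k)) * (-(v s * s ^ (2 * k + 1))))
        = -(v s * s) * ((s ^ 2 + (-s ^ 2)) ^ (m + 1)) := by
      rw [add_pow, Finset.mul_sum]
      exact Finset.sum_congr rfl fun k _ => by ring
    have hS1 : (∑ k ∈ Finset.range (m + 2),
        (((m + 1).choose k : ℝ) * (((m + 1 - k : ℕ) : ℝ) * (-s ^ 2) ^ (m + 1 - k - 1)
            * (-(2 * s)))) * Afun v (2 * k + 1) s)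
        = -(2 * (m + 1) * s) * Gfun v m s := by
      rw [Finset.sum_range_succ]
      simp only [Nat.sub_self, Nat.cast_zero, zero_mul, mul_zero, zero_add, add_zero]
      rw [G_eq_sum hv hdec m hs, Finset.mul_sum]
      refine Finset.sum_congr rfl fun k hk => ?_
      have hkm : k ≤ m := Nat.lt_succ_iff.mp (Finset.mem_range.mp hk)
      have he1 : m + 1 - k - 1 = m - k := by omega
      have hc : ((m + 1 - k : ℕ) : ℝ) * (((m + 1).choose k : ℝ))
          = ((m : ℝ) + 1) * (m.choose k : ℝ) := by
        have := nat_key m k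
        exact_mod_cast congrArg (Nat.cast (R := ℝ)) this
      rw [he1]
      linear_combination ((-s ^ 2) ^ (m - k) * (-(2 * s)) * Afun v (2 * k + 1) s) * hc
    rw [hS1, hS2]
    simp
  rw [hval] at hG
  exact hG


lemma dop_G (hv : ContinuousOn v (Set.Ioi 0)) (hdec : RapidDecay v) (m : ℕ) :
    ∀ k, k ≤ m → ∀ s : ℝ, 0 < s →
      Dop k (Gfun v m) s = (-1 : ℝ) ^ k * (m.descFactorial k : ℝ) * Gfun v (m - k) s := by
  intro k
  induction k with
  | zero => intro _ s _; simp [Dop]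
  | succ k ih =>
    intro hk s hs
    have hk' : k ≤ m := by omega
    show deriv (Dop k (Gfun v m)) s / (2 * s) = _
    have hev : Dop k (Gfun v m) =ᶠ[𝓝 s]
        fun x => (-1 : ℝ) ^ k * (m.descFactorial k : ℝ) * Gfun v (m - k) x :=
      Filter.eventuallyEq_of_mem (Ioi_mem_nhds hs) fun x hx => ih hk' x hx
    rw [Filter.EventuallyEq.deriv_eq hev]
    set j := m - (k + 1) with hj
    have hmk : m - k = j + 1 := by omega
    have hd : HasDerivAt (Gfun v (m - k)) (-(2 * (j + 1) * s) * Gfun v j s) s := by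
      rw [hmk]; exact hasDerivAt_G_succ hv hdec j hs
    rw [(hd.const_mul ((-1 : ℝ) ^ k * (m.descFactorial k : ℝ))).deriv]
    rw [Nat.descFactorial_succ, hmk]
    have hs' : (s : ℝ) ≠ 0 := ne_of_gt hs
    push_cast
    field_simp
    ring

end StmtTen

open Set Filter Topology MeasureTheory
/-- key computation, odd-dimensional case. -/
theorem stmt_10 (m : ℕ) (v : ℝ → ℝ) (hv : ContinuousOn v (Set.Ioi 0))
    (hdec : RapidDecay v) :
    ∀ r : ℝ, 0 < r →
      Dop m (fun s => ∫ t in Set.Ioi s, (t ^ 2 - s ^ 2) ^ m * v t * t) r =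
        (-1 : ℝ) ^ m * (Nat.factorial m : ℝ) * ∫ t in Set.Ioi r, v t * t ∧
      Dop (m + 1) (fun s => ∫ t in Set.Ioi s, (t ^ 2 - s ^ 2) ^ m * v t * t) r =
        (-1 : ℝ) ^ (m + 1) * ((Nat.factorial m : ℝ) / 2) * v r := by
  intro r hr
  have hGfun : (fun s => ∫ t in Set.Ioi s, (t ^ 2 - s ^ 2) ^ m * v t * t) = Gfun v m := rfl
  have hG0 : ∀ x : ℝ, Gfun v 0 x = ∫ t in Set.Ioi x, v t * t := by
    intro x
    simp only [Gfun, pow_zero, one_mul]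
  constructor
  · rw [hGfun, dop_G hv hdec m m le_rfl r hr, Nat.sub_self, Nat.descFactorial_self, hG0]
  · rw [hGfun]
    show deriv (Dop m (Gfun v m)) r / (2 * r) = _
    have hev : Dop m (Gfun v m) =ᶠ[𝓝 r]
        fun x => (-1 : ℝ) ^ m * (m.factorial : ℝ) * Gfun v 0 x := by
      refine Filter.eventuallyEq_of_mem (Ioi_mem_nhds hr) fun x hx => ?_
      rw [dop_G hv hdec m m le_rfl x hx, Nat.sub_self, Nat.descFactorial_self]
    rw [Filter.EventuallyEq.deriv_eq hev]
    rw [((hasDerivAt_G0 hv hdec hr).const_mul ((-1 : ℝ) ^ m * (m.factorial : ℝ))).deriv]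
    have hr' : (r : ℝ) ≠ 0 := ne_of_gt hr
    field_simp
    ring
end

section
/- Let m ≥ 1 be an integer and let v : (0,∞) → ℝ be continuous with sufficient decay at infinity (say, decaying faster than any polynomial). Then for every r > 0: D_r^m ∫_r^∞ (t² − r²)^(m − 1/2) v(t) t dt = (−1)^m (Γ(m + 1/2)/Γ(1/2)) ∫_r^∞ (t² − r²)^(−1/2) v(t) t dt, where D_r denotes the operator g ↦ (1/(2r)) dg/dr and D_r^m its m-fold iterate, and Γ is the Gamma function. -/
open MeasureTheory Filter Topology

noncomputable section

section Stmt11AuxSec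
open MeasureTheory Set Filter Topology
noncomputable section
namespace Stmt11Aux

/-- The one-sided kernel integral `∫_{u>s} (u-s)^β w(u) du`. -/
def Hb (w : ℝ → ℝ) (β : ℝ) (s : ℝ) : ℝ := ∫ u in Ioi s, (u - s) ^ β * w u

structure Hyp (w : ℝ → ℝ) : Prop where
  meas : Measurable w
  cont : ContinuousOn w (Ioi 0)
  dec : ∀ n : ℕ, ∃ C : ℝ, 0 ≤ C ∧ ∀ u : ℝ, 1 ≤ u → |w u| * u ^ n ≤ C

lemma Hyp.abs {w : ℝ → ℝ} (hw : Hyp w) : Hyp fun u => |w u| := by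
  refine ⟨continuous_abs.measurable.comp hw.meas, continuous_abs.comp_continuousOn hw.cont, ?_⟩
  intro n
  obtain ⟨C, hC0, hC⟩ := hw.dec n
  exact ⟨C, hC0, fun u hu => by simpa [abs_abs] using hC u hu⟩

lemma integrableOn_kernel {w : ℝ → ℝ} (hw : Hyp w) {β s : ℝ} (hβ : -1 < β) (hs : 0 < s) :
    IntegrableOn (fun u => (u - s) ^ β * w u) (Ioi s) := by
  have hmf : Measurable fun u : ℝ => (u - s) ^ β * w u :=
    ((by fun_prop : Measurable fun u : ℝ => (u - s) ^ β)).mul hw.meas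
  rw [← Ioc_union_Ioi_eq_Ioi (le_add_of_nonneg_right (zero_le_one : (0:ℝ) ≤ 1))]
  apply IntegrableOn.union
  · -- near the endpoint
    obtain ⟨M, hM⟩ := (isCompact_Icc (a := s) (b := s + 1)).exists_bound_of_continuousOn
      (hw.cont.mono (fun x hx => lt_of_lt_of_le hs hx.1))
    set M' := max M 0 with hM'
    have hbint : IntegrableOn (fun u : ℝ => M' * (u - s) ^ β) (Ioc s (s + 1)) := by
      have h0 : IntervalIntegrable (fun x : ℝ => x ^ β) volume 0 1 :=
        intervalIntegral.intervalIntegrable_rpow' hβ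
      have h1 : IntervalIntegrable (fun u : ℝ => (u - s) ^ β) volume s (s + 1) := by
        have := h0.comp_sub_right s
        simpa [add_comm] using this
      have h2 : IntegrableOn (fun u : ℝ => (u - s) ^ β) (Ioc s (s + 1)) := by
        rwa [intervalIntegrable_iff_integrableOn_Ioc_of_le (by linarith)] at h1
      exact h2.const_mul M'
    refine Integrable.mono' hbint hmf.aestronglyMeasurable.restrict ?_
    rw [ae_restrict_iff' measurableSet_Ioc]
    refine ae_of_all _ fun u hu => ?_
    have hus : 0 ≤ u - s := by linarith [hu.1]
    have h1 : ‖(u - s) ^ β * w u‖ = (u - s) ^ β * |w u| := by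
      rw [norm_mul, Real.norm_eq_abs, Real.norm_eq_abs, abs_of_nonneg (Real.rpow_nonneg hus β)]
    rw [h1, mul_comm M' ((u - s) ^ β)]
    apply mul_le_mul_of_nonneg_left _ (Real.rpow_nonneg hus β)
    calc |w u| ≤ M := by simpa using hM u ⟨le_of_lt hu.1, hu.2⟩
    _ ≤ M' := le_max_left _ _
  · -- the tail
    set k := ⌈β⌉₊ with hk
    obtain ⟨C, hC0, hC⟩ := hw.dec (k + 2)
    have hbint : IntegrableOn (fun u : ℝ => C * u ^ (-2 : ℝ)) (Ioi (s + 1)) :=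
      ((integrableOn_Ioi_rpow_of_lt (by norm_num) (by linarith : (0:ℝ) < s + 1)).const_mul C)
    refine Integrable.mono' hbint hmf.aestronglyMeasurable.restrict ?_
    rw [ae_restrict_iff' measurableSet_Ioi]
    refine ae_of_all _ fun u hu => ?_
    have hu1 : (1:ℝ) ≤ u := by have := mem_Ioi.1 hu; linarith
    have hus : (1:ℝ) ≤ u - s := by have := mem_Ioi.1 hu; linarith
    have hu0 : (0:ℝ) < u := by linarith
    have h1 : (u - s) ^ β ≤ u ^ (k : ℝ) := by
      rcases le_or_gt β 0 with hβ0 | hβ0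
      · calc (u - s) ^ β ≤ 1 := Real.rpow_le_one_of_one_le_of_nonpos hus hβ0
          _ ≤ u ^ (k : ℝ) := Real.one_le_rpow hu1 (by positivity)
      · calc (u - s) ^ β ≤ u ^ β :=
            Real.rpow_le_rpow (by linarith) (by linarith) (le_of_lt hβ0)
          _ ≤ u ^ (k : ℝ) := Real.rpow_le_rpow_of_exponent_le hu1 (Nat.le_ceil β)
    have h2 : ‖(u - s) ^ β * w u‖ ≤ u ^ (k:ℕ) * |w u| := by
      rw [norm_mul, Real.norm_eq_abs, Real.norm_eq_abs, abs_of_nonneg (Real.rpow_nonneg (by linarith) β)]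
      rw [← Real.rpow_natCast u k]
      exact mul_le_mul_of_nonneg_right h1 (abs_nonneg _)
    refine h2.trans ?_
    have h3 : C * u ^ (-2:ℝ) = C / u ^ (2:ℕ) := by
      rw [show ((-2:ℝ)) = -((2:ℕ):ℝ) from by norm_num, Real.rpow_neg (le_of_lt hu0),
        Real.rpow_natCast, div_eq_mul_inv]
    rw [h3, le_div_iff₀ (by positivity)]
    calc u ^ k * |w u| * u ^ 2 = |w u| * u ^ (k + 2) := by ring
      _ ≤ C := hC u hu1



lemma Hb_shift (w : ℝ → ℝ) (β s : ℝ) : Hb w β s = ∫ x in Ioi 0, x ^ β * w (s + x) := by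
  have h := (measurePreserving_add_right volume s).setIntegral_preimage_emb
    (measurableEmbedding_addRight s) (fun u => (u - s) ^ β * w u) (Ioi s)
  have hpre : ((· + s) ⁻¹' Ioi s : Set ℝ) = Ioi 0 := by
    ext x; simp [mem_Ioi]
  rw [hpre] at h
  rw [Hb, ← h]
  refine setIntegral_congr_fun measurableSet_Ioi fun x _ => ?_
  simp [add_sub_cancel_right, add_comm]

lemma Hb_continuousOn {w : ℝ → ℝ} (hw : Hyp w) {β : ℝ} (hβ : -1 < β) :
    ContinuousOn (Hb w β) (Ioi 0) := by
  intro s₀ hs₀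
  have hs₀' : (0:ℝ) < s₀ := hs₀
  apply ContinuousAt.continuousWithinAt
  have hrep : Hb w β = fun s => ∫ x in Ioi 0, x ^ β * w (s + x) :=
    funext fun s => Hb_shift w β s
  rw [hrep]
  -- bound data
  obtain ⟨M, hM⟩ := (isCompact_Icc (a := s₀/2) (b := s₀ + 2)).exists_bound_of_continuousOn
    (hw.cont.mono (fun x hx => lt_of_lt_of_le (by linarith) hx.1))
  set M' := max M 0 with hM'def
  set n := ⌈β⌉₊ + 2 with hn
  obtain ⟨C, hC0, hC⟩ := hw.dec n
  have hβn : β - n < -1 := by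
    have := Nat.le_ceil β
    have : β ≤ (⌈β⌉₊ : ℝ) := this
    push_cast [hn]
    linarith
  set bound : ℝ → ℝ := fun x => if x ≤ 1 then M' * x ^ β else C * x ^ (β - n) with hbd
  apply continuousAt_of_dominated (bound := bound)
  · refine Eventually.of_forall fun s => ?_
    exact (((by fun_prop : Measurable fun x : ℝ => x ^ β)).mul
      (hw.meas.comp (measurable_const.add measurable_id))).aestronglyMeasurable.restrict
  · have hU : Ioo (s₀/2) (s₀+1) ∈ 𝓝 s₀ := isOpen_Ioo.mem_nhds ⟨by linarith, by linarith⟩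
    filter_upwards [hU] with s hsU
    rw [ae_restrict_iff' measurableSet_Ioi]
    refine ae_of_all _ fun x hx => ?_
    have hx0 : (0:ℝ) < x := hx
    have hnorm : ‖x ^ β * w (s + x)‖ = x ^ β * |w (s + x)| := by
      rw [norm_mul, Real.norm_eq_abs, Real.norm_eq_abs,
        abs_of_nonneg (Real.rpow_nonneg (le_of_lt hx0) β)]
    rcases le_or_gt x 1 with hx1 | hx1
    · have hbx : bound x = M' * x ^ β := by rw [hbd]; simp only []; rw [if_pos hx1]
      rw [hnorm, hbx, mul_comm M' (x ^ β)]
      apply mul_le_mul_of_nonneg_left _ (Real.rpow_nonneg (le_of_lt hx0) β)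
      calc |w (s + x)| ≤ M := by
            simpa using hM (s + x) ⟨by linarith [hsU.1], by linarith [hsU.2]⟩
        _ ≤ M' := le_max_left _ _
    · have hbx : bound x = C * x ^ (β - n) := by
        rw [hbd]; simp only []; rw [if_neg (not_le.2 hx1)]
      rw [hnorm, hbx]
      have hsx1 : (1:ℝ) ≤ s + x := by linarith [hsU.1]
      have hxx : x ≤ s + x := by linarith [hsU.1]
      have h1 : |w (s + x)| ≤ C / x ^ n := by
        have h2 := hC (s + x) hsx1
        have h3 : (x:ℝ) ^ n ≤ (s + x) ^ n := pow_le_pow_left₀ (le_of_lt hx0) hxx n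
        have h4 : |w (s + x)| * x ^ n ≤ C := le_trans
          (mul_le_mul_of_nonneg_left h3 (abs_nonneg _)) h2
        rwa [le_div_iff₀ (by positivity)]
      calc x ^ β * |w (s + x)| ≤ x ^ β * (C / x ^ n) :=
            mul_le_mul_of_nonneg_left h1 (Real.rpow_nonneg (le_of_lt hx0) β)
        _ = C * x ^ (β - n) := by
            rw [Real.rpow_sub hx0, Real.rpow_natCast]
            field_simp
  · -- integrability of the bound
    have : IntegrableOn bound (Ioc 0 1 ∪ Ioi 1) := by
      apply IntegrableOn.union
      · have h2 : IntegrableOn (fun x : ℝ => x ^ β) (Ioc 0 1) := by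
          have h1 : IntervalIntegrable (fun x : ℝ => x ^ β) volume 0 1 :=
            intervalIntegral.intervalIntegrable_rpow' hβ
          rwa [intervalIntegrable_iff_integrableOn_Ioc_of_le (by norm_num)] at h1
        refine IntegrableOn.congr_fun (h2.const_mul M') (fun x hx => ?_) measurableSet_Ioc
        rw [hbd]; simp [hx.2]
      · have h2 : IntegrableOn (fun x : ℝ => C * x ^ (β - n)) (Ioi 1) :=
          (integrableOn_Ioi_rpow_of_lt hβn (by norm_num)).const_mul C
        refine IntegrableOn.congr_fun h2 (fun x hx => ?_) measurableSet_Ioi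
        rw [hbd]; simp [if_neg (not_le.2 (mem_Ioi.1 hx))]
    rwa [Ioc_union_Ioi_eq_Ioi (by norm_num : (0:ℝ) ≤ 1)] at this
  · rw [ae_restrict_iff' measurableSet_Ioi]
    refine ae_of_all _ fun x hx => ?_
    have hx0 : (0:ℝ) < x := hx
    have hin : ContinuousAt (fun s : ℝ => s + x) s₀ := by fun_prop
    have hout : ContinuousAt w (s₀ + x) :=
      hw.cont.continuousAt (Ioi_mem_nhds (by linarith : (0:ℝ) < s₀ + x))
    exact continuousAt_const.mul (ContinuousAt.comp (f := fun s : ℝ => s + x) hout hin)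

lemma inner_eval (w : ℝ → ℝ) {γ a σ : ℝ} (hσ : a ≤ σ) :
    ∫ u in Ioi a, (if σ < u then (u - σ) ^ γ * w u else 0) = Hb w γ σ := by
  have h1 : (fun u => if σ < u then (u - σ) ^ γ * w u else 0)
      = (Ioi σ).indicator (fun u => (u - σ) ^ γ * w u) := by
    funext u
    rw [Set.indicator_apply]
    simp [mem_Ioi]
  rw [h1, setIntegral_indicator measurableSet_Ioi, Ioi_inter_Ioi, max_eq_right hσ, Hb]

lemma Hb_identity {w : ℝ → ℝ} (hw : Hyp w) {β a b : ℝ} (hβ : 0 < β) (ha : 0 < a) (hab : a ≤ b) :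
    Hb w β a = Hb w β b + β * ∫ σ in a..b, Hb w (β - 1) σ := by
  have hβ1 : (-1:ℝ) < β - 1 := by linarith
  have hb0 : 0 < b := lt_of_lt_of_le ha hab
  set f : ℝ → ℝ → ℝ := fun σ u => if σ < u then (u - σ) ^ (β - 1) * w u else 0 with hf
  have hfm : Measurable (Function.uncurry f) := by
    apply Measurable.ite (measurableSet_lt measurable_fst measurable_snd)
    · exact ((by fun_prop : Measurable fun p : ℝ × ℝ => (p.2 - p.1) ^ (β - 1))).mul
        (hw.meas.comp measurable_snd)
    · exact measurable_const
  have hnormf : ∀ σ u : ℝ, ‖f σ u‖ = (if σ < u then (u - σ) ^ (β - 1) * |w u| else 0) := by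
    intro σ u
    simp only [hf]
    split_ifs with h
    · rw [Real.norm_eq_abs, abs_mul,
        abs_of_nonneg (Real.rpow_nonneg (by linarith : (0:ℝ) ≤ u - σ) (β - 1))]
    · simp
  have hInt : Integrable (Function.uncurry f)
      ((volume.restrict (Ioc a b)).prod (volume.restrict (Ioi a))) := by
    rw [integrable_prod_iff hfm.aestronglyMeasurable]
    constructor
    · filter_upwards [ae_restrict_mem measurableSet_Ioc] with σ hσ
      have hσ0 : (0:ℝ) < σ := lt_trans ha hσ.1
      have hfeq : f σ = (Ioi σ).indicator fun u => (u - σ) ^ (β - 1) * w u := by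
        funext u; rw [Set.indicator_apply]; simp only [hf, mem_Ioi]
      show Integrable (f σ) _
      rw [hfeq]
      exact ((integrable_indicator_iff measurableSet_Ioi).2
        (integrableOn_kernel hw hβ1 hσ0)).integrableOn
    · have hAcont : ContinuousOn (Hb (fun u => |w u|) (β - 1)) (Ioi 0) :=
        Hb_continuousOn hw.abs hβ1
      have hAint : IntegrableOn (Hb (fun u => |w u|) (β - 1)) (Ioc a b) :=
        (((hAcont.mono (fun x hx => lt_of_lt_of_le ha hx.1)).integrableOn_Icc)).mono_set
          Ioc_subset_Icc_self
      refine hAint.congr ?_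
      rw [Filter.EventuallyEq, ae_restrict_iff' measurableSet_Ioc]
      refine ae_of_all _ fun σ hσ => ?_
      simp only [Function.uncurry_apply_pair, hnormf]
      exact (inner_eval (fun u => |w u|) (le_of_lt hσ.1)).symm
  have hswap := integral_integral_swap (f := f) hInt
  have hL : ∫ σ in Ioc a b, (∫ u in Ioi a, f σ u)
      = ∫ σ in Ioc a b, Hb w (β - 1) σ := by
    refine setIntegral_congr_fun measurableSet_Ioc fun σ hσ => ?_
    exact inner_eval w (le_of_lt hσ.1)
  have hR : ∀ u ∈ Ioi a, (∫ σ in Ioc a b, f σ u)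
      = β⁻¹ * ((u - a) ^ β * w u - (Ioi b).indicator (fun x => (x - b) ^ β * w x) u) := by
    intro u hu
    have hau : a < u := hu
    by_cases hub : b < u
    · have h1 : ∀ σ ∈ Ioc a b, f σ u = (u - σ) ^ (β - 1) * w u := fun σ hσ => by
        simp only [hf]; rw [if_pos (lt_of_le_of_lt hσ.2 hub)]
      rw [setIntegral_congr_fun measurableSet_Ioc h1,
        ← intervalIntegral.integral_of_le hab,
        intervalIntegral.integral_mul_const,
        intervalIntegral.integral_comp_sub_left (fun y => y ^ (β - 1)) u,
        integral_rpow (Or.inl hβ1),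
        Set.indicator_of_mem (mem_Ioi.2 hub)]
      rw [show β - 1 + 1 = β from by ring]
      field_simp
    · push_neg at hub
      have h1 : (fun σ => f σ u) = (Iio u).indicator fun σ => (u - σ) ^ (β - 1) * w u := by
        funext σ; rw [Set.indicator_apply]; simp only [hf, mem_Iio]
      have h2 : Ioc a b ∩ Iio u = Ioo a u := by
        ext σ
        constructor
        · rintro ⟨⟨h3, _⟩, h5⟩; exact ⟨h3, h5⟩
        · rintro ⟨h3, h5⟩; exact ⟨⟨h3, le_trans (le_of_lt h5) hub⟩, h5⟩
      rw [h1, setIntegral_indicator measurableSet_Iio, h2,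
        ← integral_Ioc_eq_integral_Ioo,
        ← intervalIntegral.integral_of_le (le_of_lt hau),
        intervalIntegral.integral_mul_const,
        intervalIntegral.integral_comp_sub_left (fun y => y ^ (β - 1)) u,
        integral_rpow (Or.inl hβ1),
        Set.indicator_of_notMem (by simpa using hub)]
      rw [show β - 1 + 1 = β from by ring, sub_self, Real.zero_rpow (ne_of_gt hβ)]
      field_simp
      ring
  have hR2 : ∫ u in Ioi a, (∫ σ in Ioc a b, f σ u)
      = β⁻¹ * (Hb w β a - Hb w β b) := by
    rw [setIntegral_congr_fun measurableSet_Ioi hR]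
    have hint1 : IntegrableOn (fun u => (u - a) ^ β * w u) (Ioi a) :=
      integrableOn_kernel hw (by linarith) ha
    have hint2 : Integrable ((Ioi b).indicator fun x => (x - b) ^ β * w x) volume :=
      (integrable_indicator_iff measurableSet_Ioi).2 (integrableOn_kernel hw (by linarith) hb0)
    rw [integral_const_mul, integral_sub hint1 hint2.integrableOn]
    have h3 : ∫ u in Ioi a, (Ioi b).indicator (fun x => (x - b) ^ β * w x) u = Hb w β b := by
      rw [setIntegral_indicator measurableSet_Ioi, Ioi_inter_Ioi, max_eq_right hab, Hb]
    rw [h3]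
    rfl
  rw [hL, hR2] at hswap
  rw [intervalIntegral.integral_of_le hab, hswap]
  field_simp
  ring


lemma Hb_hasDerivAt {w : ℝ → ℝ} (hw : Hyp w) {β s₀ : ℝ} (hβ : 0 < β) (hs₀ : 0 < s₀) :
    HasDerivAt (Hb w β) (-β * Hb w (β - 1) s₀) s₀ := by
  have hβ1 : (-1:ℝ) < β - 1 := by linarith
  set a := s₀ / 2 with ha
  have ha0 : 0 < a := by rw [ha]; linarith
  have has : a < s₀ := by rw [ha]; linarith
  have hcont : ContinuousOn (Hb w (β - 1)) (Ioi 0) := Hb_continuousOn hw hβ1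
  have h1 : ∀ s ∈ Ioi a, Hb w β s = Hb w β a - β * ∫ σ in a..s, Hb w (β - 1) σ := by
    intro s hs
    have := Hb_identity hw hβ ha0 (le_of_lt (mem_Ioi.1 hs))
    linarith [this]
  have hint : IntervalIntegrable (Hb w (β - 1)) volume a s₀ := by
    apply ContinuousOn.intervalIntegrable
    apply hcont.mono
    rw [uIcc_of_le (le_of_lt has)]
    exact fun x hx => lt_of_lt_of_le ha0 hx.1
  have hmeas : StronglyMeasurableAtFilter (Hb w (β - 1)) (𝓝 s₀) volume :=
    ContinuousOn.stronglyMeasurableAtFilter isOpen_Ioi hcont s₀ hs₀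
  have hca : ContinuousAt (Hb w (β - 1)) s₀ := hcont.continuousAt (Ioi_mem_nhds hs₀)
  have hD := intervalIntegral.integral_hasDerivAt_right hint hmeas hca
  have hD2 : HasDerivAt (fun s => Hb w β a - β * ∫ σ in a..s, Hb w (β - 1) σ)
      (-β * Hb w (β - 1) s₀) s₀ := by
    have := (hD.const_mul β).const_sub (Hb w β a)
    simpa using this
  apply hD2.congr_of_eventuallyEq
  filter_upwards [Ioi_mem_nhds has] with s hs
  exact h1 s hs

lemma gamma_prod (m : ℕ) :
    Real.Gamma ((m : ℝ) + 1 / 2)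
      = (∏ i ∈ Finset.range m, ((i : ℝ) + 1 / 2)) * Real.Gamma (1 / 2) := by
  induction m with
  | zero => simp
  | succ k ih =>
    have hcast : ((k + 1 : ℕ) : ℝ) + 1 / 2 = ((k : ℝ) + 1 / 2) + 1 := by push_cast; ring
    rw [hcast, Real.Gamma_add_one (by positivity), ih, Finset.prod_range_succ]
    ring

lemma subst_sq (v w : ℝ → ℝ) (hww : ∀ u : ℝ, 0 < u → w u = v (Real.sqrt u))
    (β : ℝ) {r : ℝ} (hr : 0 < r) :
    ∫ t in Ioi r, (t ^ 2 - r ^ 2) ^ β * v t * t = (1 / 2) * Hb w β (r ^ 2) := by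
  have himg : (fun t : ℝ => t ^ 2) '' Ioi r = Ioi (r ^ 2) := by
    ext u
    constructor
    · rintro ⟨t, ht, rfl⟩
      exact pow_lt_pow_left₀ (mem_Ioi.1 ht) (le_of_lt hr) (by norm_num)
    · intro hu
      have hu0 : (0:ℝ) ≤ u := le_trans (by positivity) (le_of_lt (mem_Ioi.1 hu))
      refine ⟨Real.sqrt u, ?_, Real.sq_sqrt hu0⟩
      rw [mem_Ioi, show r = Real.sqrt (r ^ 2) from (Real.sqrt_sq (le_of_lt hr)).symm]
      exact Real.sqrt_lt_sqrt (by positivity) (mem_Ioi.1 hu)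
  have hderiv : ∀ t ∈ Ioi r, HasDerivWithinAt (fun t : ℝ => t ^ 2) (2 * t) (Ioi r) t := by
    intro t _
    simpa using (hasDerivAt_pow 2 t).hasDerivWithinAt
  have hinj : InjOn (fun t : ℝ => t ^ 2) (Ioi r) := by
    intro x hx y hy hxy
    have hx0 : (0:ℝ) < x := lt_trans hr hx
    have hy0 : (0:ℝ) < y := lt_trans hr hy
    have hxy' : x ^ 2 = y ^ 2 := hxy
    calc x = Real.sqrt (x ^ 2) := (Real.sqrt_sq hx0.le).symm
      _ = Real.sqrt (y ^ 2) := by rw [hxy']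
      _ = y := Real.sqrt_sq hy0.le
  have hcv := integral_image_eq_integral_abs_deriv_smul measurableSet_Ioi hderiv hinj
    (fun u => (u - r ^ 2) ^ β * w u)
  rw [himg] at hcv
  rw [Hb, hcv, ← integral_const_mul]
  refine setIntegral_congr_fun measurableSet_Ioi fun t ht => ?_
  have ht0 : (0:ℝ) < t := lt_trans hr ht
  have h1 : w (t ^ 2) = v t := by
    rw [hww (t ^ 2) (by positivity), Real.sqrt_sq (le_of_lt ht0)]
  rw [smul_eq_mul, abs_of_nonneg (by linarith : (0:ℝ) ≤ 2 * t), h1]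
  ring

end Stmt11Aux
end

end Stmt11AuxSec

/-- key computation, even-dimensional case. -/
theorem stmt_11 (m : ℕ) (hm : 1 ≤ m) (v : ℝ → ℝ) (hv : ContinuousOn v (Set.Ioi 0))
    (hdec : RapidDecay v) :
    ∀ r : ℝ, 0 < r →
      Dop m (fun s => ∫ t in Set.Ioi s, (t ^ 2 - s ^ 2) ^ ((m : ℝ) - 1 / 2) * v t * t) r =
        (-1 : ℝ) ^ m * (Real.Gamma ((m : ℝ) + 1 / 2) / Real.Gamma (1 / 2)) *
          ∫ t in Set.Ioi r, (t ^ 2 - r ^ 2) ^ (-(1 : ℝ) / 2) * v t * t := by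
  classical
  intro r hr
  have hvs : ContinuousOn (fun u : ℝ => v (Real.sqrt u)) (Set.Ioi 0) := by
    apply hv.comp Real.continuous_sqrt.continuousOn
    intro u hu
    exact Set.mem_Ioi.2 (Real.sqrt_pos.2 hu)
  set w : ℝ → ℝ := (Set.Ioi (0:ℝ)).piecewise (fun u => v (Real.sqrt u)) (fun _ => 0) with hwdef
  have hww : ∀ u : ℝ, 0 < u → w u = v (Real.sqrt u) := fun u hu =>
    Set.piecewise_eq_of_mem _ _ _ hu
  have hyp : Stmt11Aux.Hyp w := by
    refine ⟨?_, ?_, ?_⟩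
    · exact ContinuousOn.measurable_piecewise hvs continuousOn_const measurableSet_Ioi
    · exact ContinuousOn.congr hvs (fun u hu => hww u hu)
    · intro n
      obtain ⟨C, hC⟩ := hdec (2 * n)
      refine ⟨max C 0, le_max_right _ _, fun u hu => ?_⟩
      have hu0 : (0:ℝ) < u := by linarith
      have h1 : (1:ℝ) ≤ Real.sqrt u := by
        rw [show (1:ℝ) = Real.sqrt 1 from Real.sqrt_one.symm]
        exact Real.sqrt_le_sqrt hu
      have h2 := hC (Real.sqrt u) h1
      have h3 : (Real.sqrt u) ^ (2 * n) = u ^ n := by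
        rw [pow_mul, Real.sq_sqrt hu0.le]
      rw [hww u hu0, ← h3]
      exact le_trans h2 (le_max_left _ _)
  have key : ∀ j : ℕ, j ≤ m → ∀ ρ : ℝ, 0 < ρ →
      Dop j (fun s => ∫ t in Set.Ioi s, (t ^ 2 - s ^ 2) ^ ((m : ℝ) - 1 / 2) * v t * t) ρ
        = ((1/2) * (-1 : ℝ) ^ j * ∏ i ∈ Finset.range j, ((m : ℝ) - i - 1/2))
            * Stmt11Aux.Hb w ((m : ℝ) - j - 1/2) (ρ ^ 2) := by
    intro j
    induction j with
    | zero =>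
      intro _ ρ hρ
      have h0 : (m:ℝ) - (0:ℕ) - 1/2 = (m:ℝ) - 1/2 := by norm_num
      simp only [Dop, h0, pow_zero, Finset.range_zero, Finset.prod_empty]
      rw [Stmt11Aux.subst_sq v w hww ((m : ℝ) - 1/2) hρ]
      ring
    | succ k ih =>
      intro hk ρ hρ
      have hkm : k ≤ m := Nat.le_of_succ_le hk
      have hkR : ((k:ℝ) + 1) ≤ (m:ℝ) := by exact_mod_cast hk
      have hβ : (0:ℝ) < (m:ℝ) - k - 1/2 := by linarith
      set c : ℝ := (1/2) * (-1 : ℝ) ^ k * ∏ i ∈ Finset.range k, ((m : ℝ) - i - 1/2) with hc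
      have heq : Dop k (fun s => ∫ t in Set.Ioi s, (t ^ 2 - s ^ 2) ^ ((m : ℝ) - 1 / 2) * v t * t)
          =ᶠ[nhds ρ] fun x => c * Stmt11Aux.Hb w ((m : ℝ) - k - 1/2) (x ^ 2) := by
        filter_upwards [Ioi_mem_nhds hρ] with x hx
        exact ih hkm x hx
      show deriv (Dop k (fun s => ∫ t in Set.Ioi s,
        (t ^ 2 - s ^ 2) ^ ((m : ℝ) - 1 / 2) * v t * t)) ρ / (2 * ρ) = _
      rw [Filter.EventuallyEq.deriv_eq heq]
      have hd1 : HasDerivAt (Stmt11Aux.Hb w ((m : ℝ) - k - 1/2))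
          (-((m : ℝ) - k - 1/2) * Stmt11Aux.Hb w (((m : ℝ) - k - 1/2) - 1) (ρ ^ 2)) (ρ ^ 2) :=
        Stmt11Aux.Hb_hasDerivAt hyp hβ (by positivity)
      have hd2 : HasDerivAt (fun x : ℝ => x ^ 2) (2 * ρ) ρ := by
        simpa using hasDerivAt_pow 2 ρ
      have hd3 : HasDerivAt (fun x : ℝ => Stmt11Aux.Hb w ((m : ℝ) - k - 1/2) (x ^ 2))
          ((-((m : ℝ) - k - 1/2) * Stmt11Aux.Hb w (((m : ℝ) - k - 1/2) - 1) (ρ ^ 2)) * (2 * ρ)) ρ := by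
        have h := HasDerivAt.comp (h₂ := Stmt11Aux.Hb w ((m : ℝ) - k - 1/2))
          (h := fun x : ℝ => x ^ 2) ρ hd1 hd2
        exact h
      have hd4 := hd3.const_mul c
      rw [hd4.deriv]
      have hβ1 : ((m : ℝ) - k - 1/2) - 1 = (m : ℝ) - ((k + 1 : ℕ) : ℝ) - 1/2 := by
        push_cast; ring
      rw [hβ1, Finset.prod_range_succ]
      have hρ0 : (2:ℝ) * ρ ≠ 0 := by positivity
      have hdiv : ∀ A : ℝ, c * (A * (2 * ρ)) / (2 * ρ) = c * A := fun A => by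
        rw [← mul_assoc, mul_div_assoc, div_self hρ0, mul_one]
      rw [hdiv, hc, pow_succ]
      ring
  have hkey := key m le_rfl r hr
  rw [hkey, Stmt11Aux.subst_sq v w hww (-(1:ℝ)/2) hr]
  have hexp : (m:ℝ) - (m:ℕ) - 1/2 = -(1:ℝ)/2 := by ring
  have hprod : ∏ i ∈ Finset.range m, ((m : ℝ) - i - 1/2)
      = ∏ i ∈ Finset.range m, ((i:ℝ) + 1/2) := by
    rw [← Finset.prod_range_reflect (fun i => (i:ℝ) + 1/2) m]
    apply Finset.prod_congr rfl
    intro j hj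
    have hj' : j < m := Finset.mem_range.1 hj
    have h1 : (((m - 1 - j : ℕ)) : ℝ) = (m:ℝ) - 1 - j := by
      have hj1 : j ≤ m - 1 := Nat.le_sub_one_of_lt hj'
      push_cast [Nat.cast_sub hj1, Nat.cast_sub hm]
      ring
    rw [h1]
    ring
  have hgne : Real.Gamma (1/2 : ℝ) ≠ 0 :=
    (Real.Gamma_pos_of_pos (by norm_num : (0:ℝ) < 1/2)).ne'
  have hgam : Real.Gamma ((m:ℝ) + 1/2) / Real.Gamma (1/2)
      = ∏ i ∈ Finset.range m, ((i:ℝ) + 1/2) := by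
    rw [Stmt11Aux.gamma_prod m, mul_div_assoc, div_self hgne, mul_one]
  rw [hexp, hgam, hprod]
  ring
end
end
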